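/- arXiv:2302.12642 — 5 statements merged into one kernel-verified Lean document; each statement's English description precedes it below -/
import Mathlib

section
/- Let η > 0, μ > 0, m ∈ ℕ, a ∈ ℝ, and let s > 0 satisfy s^η > |a|. Then ∫_0^∞ e^(-st) t^(ηm+μ-1) E^m_{η,μ}(a t^η) dt = m! · s^(η-μ) / (s^η − a)^(m+1), and in particular the integral converges absolutely. -/
open MeasureTheory Real

/-- The generalized Mittag-Leffler function
`E^m_{η,μ}(x) = ∑_{k=0}^∞ ((k+m)!/k!) x^k / Γ(ηk + ηm + μ)`. -/
noncomputable def mittagLefflerGen (m : ℕ) (η μ x : ℝ) : ℝ :=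
  ∑' k : ℕ, ((k + m).factorial : ℝ) / (k.factorial : ℝ) * x ^ k /
    Real.Gamma (η * k + η * m + μ)

lemma integrable_tsum_aux {α : Type*} [MeasurableSpace α] {μ : Measure α} {f : ℕ → α → ℝ}
    (hf : ∀ i, Integrable (f i) μ)
    (hsum : Summable fun i => ∫ a, ‖f i a‖ ∂μ) :
    Integrable (fun a => ∑' i, f i a) μ := by
  have hf'' : ∀ i, AEMeasurable (fun x => (‖f i x‖₊ : ENNReal)) μ := fun i => (hf i).1.aemeasurable.nnnorm.coe_nnreal_ennreal
  have hlin : ∀ i, ∫⁻ a, (‖f i a‖₊ : ENNReal) ∂μ = ENNReal.ofReal (∫ a, ‖f i a‖ ∂μ) := by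
    intro i
    rw [lintegral_coe_eq_integral _ (hf i).norm]
    simp
  have hf' : ∑' i, ∫⁻ a, (‖f i a‖₊ : ENNReal) ∂μ ≠ ⊤ := by
    simp_rw [hlin]
    rw [← ENNReal.ofReal_tsum_of_nonneg (fun i => integral_nonneg (fun a => norm_nonneg _)) hsum]
    exact ENNReal.ofReal_ne_top
  have hhh : ∀ᵐ a ∂μ, Summable fun n => ‖f n a‖ := by
    have h2 : ∫⁻ a, ∑' i, (‖f i a‖₊ : ENNReal) ∂μ ≠ ⊤ := by
      rwa [lintegral_tsum hf'']
    refine (ae_lt_top' (AEMeasurable.ennreal_tsum hf'') h2).mono ?_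
    intro x hx
    have := ENNReal.tsum_coe_ne_top_iff_summable_coe.1 hx.ne
    simpa using this
  constructor
  · rw [aestronglyMeasurable_iff_aemeasurable]
    refine aemeasurable_of_tendsto_metrizable_ae (Filter.atTop : Filter ℕ)
      (f := fun n a => ∑ i ∈ Finset.range n, f i a)
      (fun n => Finset.aemeasurable_fun_sum _ (fun i _ => (hf i).1.aemeasurable)) ?_
    filter_upwards [hhh] with x hx
    exact hx.of_norm.hasSum.tendsto_sum_nat
  · rw [hasFiniteIntegral_iff_norm]
    calc ∫⁻ a, ENNReal.ofReal ‖∑' i, f i a‖ ∂μ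
        ≤ ∫⁻ a, ∑' i, (‖f i a‖₊ : ENNReal) ∂μ := by
          refine lintegral_mono_ae ?_
          filter_upwards [hhh] with x hx
          calc ENNReal.ofReal ‖∑' i, f i x‖ ≤ ENNReal.ofReal (∑' i, ‖f i x‖) :=
                ENNReal.ofReal_le_ofReal (norm_tsum_le_tsum_norm hx)
            _ = ∑' i, (‖f i x‖₊ : ENNReal) := by
                rw [ENNReal.ofReal_tsum_of_nonneg (fun i => norm_nonneg _) hx]
                congr 1; ext n; exact ENNReal.ofReal_eq_coe_nnreal (norm_nonneg _)
      _ < ⊤ := by rw [lintegral_tsum hf'']; exact hf'.lt_top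


/-- Laplace transform of `t ↦ t^(ηm+μ-1) E^m_{η,μ}(a t^η)`:
it is absolutely integrable and equals `m! s^(η-μ) / (s^η − a)^(m+1)` for `s^η > |a|`. -/
theorem laplace_mittagLefflerGen (η μ : ℝ) (m : ℕ) (a s : ℝ) (hη : 0 < η) (hμ : 0 < μ)
    (hs : 0 < s) (hsa : |a| < s ^ η) :
    IntegrableOn
      (fun t : ℝ => Real.exp (-s * t) *
        (t ^ (η * m + μ - 1) * mittagLefflerGen m η μ (a * t ^ η))) (Set.Ioi 0) ∧
    ∫ t in Set.Ioi (0:ℝ),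
        Real.exp (-s * t) * (t ^ (η * m + μ - 1) * mittagLefflerGen m η μ (a * t ^ η))
      = (m.factorial : ℝ) * s ^ (η - μ) / (s ^ η - a) ^ (m + 1) := by
  set p : ℕ → ℝ := fun k => η * k + η * m + μ with hp
  have hppos : ∀ k, 0 < p k := fun k =>
    add_pos_of_nonneg_of_pos (add_nonneg (mul_nonneg hη.le (Nat.cast_nonneg k))
      (mul_nonneg hη.le (Nat.cast_nonneg m))) hμ
  set c : ℕ → ℝ := fun k => ((k + m).factorial : ℝ) / (k.factorial : ℝ) * a ^ k /
    Real.Gamma (p k) with hc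
  set F : ℕ → ℝ → ℝ := fun k t => c k * (t ^ (p k - 1) * Real.exp (-(s * t))) with hF
  -- integrability of each term
  have hbase : ∀ k, IntegrableOn (fun t : ℝ => t ^ (p k - 1) * Real.exp (-(s * t))) (Set.Ioi 0) := by
    intro k
    have h := integrableOn_rpow_mul_exp_neg_mul_rpow (s := p k - 1) (p := 1) (b := s)
      (by linarith [hppos k]) one_pos hs
    refine h.congr_fun (fun x hx => ?_) measurableSet_Ioi
    simp only [Real.rpow_one]
    ring_nf
  have hFint : ∀ k, IntegrableOn (F k) (Set.Ioi 0) := fun k => (hbase k).const_mul _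
  -- value of each base integral
  have hbaseval : ∀ k, ∫ t in Set.Ioi (0:ℝ), t ^ (p k - 1) * Real.exp (-(s * t))
      = (1 / s) ^ (p k) * Real.Gamma (p k) := fun k =>
    integral_rpow_mul_exp_neg_mul_Ioi (hppos k) hs
  -- norm integrals
  have hnormval : ∀ k, ∫ t in Set.Ioi (0:ℝ), ‖F k t‖
      = |c k| * ((1 / s) ^ (p k) * Real.Gamma (p k)) := by
    intro k
    rw [← hbaseval k, ← integral_const_mul]
    refine setIntegral_congr_fun measurableSet_Ioi (fun x hx => ?_)
    have hx0 : (0:ℝ) < x := hx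
    rw [Real.norm_eq_abs, hF, abs_mul]
    congr 1
    exact abs_of_nonneg (by positivity)
  -- factorial identity
  have hfac : ∀ k : ℕ, ((k + m).factorial : ℝ) / (k.factorial : ℝ)
      = (m.factorial : ℝ) * ((k + m).choose m : ℝ) := by
    intro k
    have h := Nat.add_choose_mul_factorial_mul_factorial k m
    field_simp
    push_cast [← h]
    ring
  -- summability of norm integrals
  have hS : 0 < s ^ η := Real.rpow_pos_of_pos hs η
  have hx' : |a| * (1 / s) ^ η < 1 := by
    rw [one_div, Real.inv_rpow hs.le, ← div_eq_mul_inv, div_lt_one hS]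
    exact hsa
  -- summability of norm integrals
  have hsplit : ∀ k : ℕ, (1/s : ℝ) ^ (p k) = ((1/s) ^ η) ^ k * (1/s) ^ (η * m + μ) := by
    intro k
    have : p k = η * k + (η * m + μ) := by simp only [hp]; ring
    rw [this, Real.rpow_add (by positivity), Real.rpow_mul (by positivity), Real.rpow_natCast]
  have hΓpos : ∀ k, 0 < Real.Gamma (p k) := fun k => Real.Gamma_pos_of_pos (hppos k)
  have hnormsum : Summable (fun k => ∫ t in Set.Ioi (0:ℝ), ‖F k t‖) := by
    have hr : ‖|a| * (1/s) ^ η‖ < 1 := by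
      rw [Real.norm_eq_abs, abs_of_nonneg (by positivity)]; exact hx'
    have hgeo := (summable_choose_mul_geometric_of_norm_lt_one m hr).mul_left
      ((1/s : ℝ) ^ (η * m + μ) * m.factorial)
    refine hgeo.congr fun k => ?_
    rw [hnormval k, hc, hsplit k]
    rw [abs_div, abs_of_pos (hΓpos k), abs_mul, abs_pow,
      abs_of_nonneg (by positivity : (0:ℝ) ≤ ((k + m).factorial : ℝ) / (k.factorial : ℝ)),
      hfac k, mul_pow]
    field_simp [(hΓpos k).ne']
  -- pointwise identity
  have hpt : ∀ t ∈ Set.Ioi (0:ℝ), Real.exp (-s * t) *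
      (t ^ (η * m + μ - 1) * mittagLefflerGen m η μ (a * t ^ η)) = ∑' k, F k t := by
    intro t ht
    have ht0 : (0:ℝ) < t := ht
    rw [mittagLefflerGen, ← tsum_mul_left, ← tsum_mul_left]
    refine tsum_congr fun k => ?_
    have h2 : (a * t ^ η) ^ k = a ^ k * t ^ (η * (k:ℝ)) := by
      rw [mul_pow, ← Real.rpow_natCast (t ^ η), ← Real.rpow_mul ht0.le]
    have h3 : t ^ (η * (k:ℝ) + η * (m:ℝ) + μ - 1) = t ^ (η * (m:ℝ) + μ - 1) * t ^ (η * (k:ℝ)) := by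
      rw [← Real.rpow_add ht0]; ring_nf
    simp only [hF, hc, hp, h2]
    rw [h3, neg_mul]
    ring
  have haeq : (fun t : ℝ => Real.exp (-s * t) *
      (t ^ (η * m + μ - 1) * mittagLefflerGen m η μ (a * t ^ η)))
      =ᵐ[volume.restrict (Set.Ioi 0)] fun t => ∑' k, F k t := by
    filter_upwards [ae_restrict_mem measurableSet_Ioi] with t ht using hpt t ht
  have hInt : IntegrableOn (fun t : ℝ => Real.exp (-s * t) *
      (t ^ (η * m + μ - 1) * mittagLefflerGen m η μ (a * t ^ η))) (Set.Ioi 0) :=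
    (integrable_tsum_aux hFint hnormsum).congr haeq.symm
  have hFval : ∀ k, ∫ t in Set.Ioi (0:ℝ), F k t = c k * ((1/s) ^ (p k) * Real.Gamma (p k)) := by
    intro k
    simp only [hF]
    rw [integral_const_mul, hbaseval k]
  have hswap := integral_tsum_of_summable_integral_norm hFint hnormsum
  have hxnorm : ‖a * (1/s) ^ η‖ < 1 := by
    rw [Real.norm_eq_abs, abs_mul, abs_of_nonneg (by positivity : (0:ℝ) ≤ (1/s) ^ η)]
    exact hx'
  have htsum : ∑' k, ∫ t in Set.Ioi (0:ℝ), F k t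
      = (m.factorial : ℝ) * s ^ (η - μ) / (s ^ η - a) ^ (m + 1) := by
    have h1 : ∀ k : ℕ, ∫ t in Set.Ioi (0:ℝ), F k t
        = ((m.factorial : ℝ) * (1/s) ^ (η * m + μ)) *
          (((k + m).choose m : ℝ) * (a * (1/s) ^ η) ^ k) := by
      intro k
      rw [hFval k, hc, hsplit k, mul_pow]
      simp only [hfac k]
      field_simp [(hΓpos k).ne']
    rw [tsum_congr h1, tsum_mul_left, tsum_choose_mul_geometric_of_norm_lt_one m hxnorm]
    have hSa : 0 < s ^ η - a := sub_pos.2 ((le_abs_self a).trans_lt hsa)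
    have e1 : 1 - a * (1/s) ^ η = (s ^ η - a) / s ^ η := by
      rw [one_div, Real.inv_rpow hs.le, ← div_eq_mul_inv]
      field_simp
    have e2 : (1/s : ℝ) ^ (η * m + μ) * (s ^ η) ^ (m + 1) = s ^ (η - μ) := by
      rw [one_div, Real.inv_rpow hs.le, ← Real.rpow_natCast (s ^ η), ← Real.rpow_mul hs.le,
        ← Real.rpow_neg hs.le, ← Real.rpow_add hs]
      congr 1
      push_cast
      ring
    rw [e1, div_pow, one_div_div]
    rw [show (m.factorial : ℝ) * (1/s) ^ (η * m + μ) *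
        ((s ^ η) ^ (m + 1) / (s ^ η - a) ^ (m + 1))
        = (m.factorial : ℝ) * ((1/s) ^ (η * m + μ) * (s ^ η) ^ (m + 1)) / (s ^ η - a) ^ (m + 1)
      from by ring, e2]
  have hval : ∫ t in Set.Ioi (0:ℝ),
      Real.exp (-s * t) * (t ^ (η * m + μ - 1) * mittagLefflerGen m η μ (a * t ^ η))
      = (m.factorial : ℝ) * s ^ (η - μ) / (s ^ η - a) ^ (m + 1) := by
    rw [integral_congr_ae haeq, ← hswap, htsum]
  exact ⟨hInt, hval⟩
end

section
/- Let ν > 0, β > 0, a ∈ ℝ, and let s > 0 satisfy s^ν > |a|. Then ∫_0^∞ e^(-st) t^(β-1) E_{ν,β}(a t^ν) dt = s^(ν-β) / (s^ν − a), and in particular the integral converges absolutely. -/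
open MeasureTheory Real

/-- The two-parameter Mittag-Leffler function `E_{α,β}(x) = ∑_{k=0}^∞ x^k / Γ(αk + β)`. -/
noncomputable def mittagLeffler (α β x : ℝ) : ℝ :=
  ∑' k : ℕ, x ^ k / Real.Gamma (α * k + β)

private lemma integrableOn_rpow_mul_exp_neg {p s : ℝ} (hp : 0 < p) (hs : 0 < s) :
    IntegrableOn (fun t : ℝ => t ^ (p - 1) * Real.exp (-(s * t))) (Set.Ioi 0) := by
  have h0 : IntegrableOn (fun x : ℝ => Real.exp (-x) * x ^ (p - 1)) (Set.Ioi 0) :=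
    Real.GammaIntegral_convergent hp
  have h1 : IntegrableOn (fun t : ℝ => Real.exp (-(s * t)) * (s * t) ^ (p - 1)) (Set.Ioi 0) :=
    (integrableOn_Ioi_comp_mul_left_iff
      (fun x : ℝ => Real.exp (-x) * x ^ (p - 1)) 0 hs).2 (by simpa using h0)
  have h2 : IntegrableOn (fun t : ℝ => (s ^ (p - 1))⁻¹ * (Real.exp (-(s * t)) * (s * t) ^ (p - 1)))
      (Set.Ioi 0) := h1.const_mul ((s ^ (p - 1))⁻¹)
  refine MeasureTheory.IntegrableOn.congr_fun h2 (fun t ht => ?_) measurableSet_Ioi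
  have ht0 : (0:ℝ) < t := ht
  have hsp : (0:ℝ) < s ^ (p - 1) := Real.rpow_pos_of_pos hs _
  rw [Real.mul_rpow hs.le ht0.le]
  field_simp

/-- Laplace transform of `t ↦ t^(β-1) E_{ν,β}(a t^ν)`:
it is absolutely integrable and equals `s^(ν-β) / (s^ν − a)` for `s^ν > |a|`. -/
theorem laplace_mittagLeffler_two_param (ν β a s : ℝ) (hν : 0 < ν) (hβ : 0 < β)
    (hs : 0 < s) (hsa : |a| < s ^ ν) :
    IntegrableOn
      (fun t : ℝ => Real.exp (-s * t) * (t ^ (β - 1) * mittagLeffler ν β (a * t ^ ν)))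
      (Set.Ioi 0) ∧
    ∫ t in Set.Ioi (0:ℝ), Real.exp (-s * t) * (t ^ (β - 1) * mittagLeffler ν β (a * t ^ ν))
      = s ^ (ν - β) / (s ^ ν - a) := by
  set μ := volume.restrict (Set.Ioi (0:ℝ)) with hμ
  set F : ℕ → ℝ → ℝ := fun k t =>
    Real.exp (-s * t) * (t ^ (β - 1) * ((a * t ^ ν) ^ k / Real.Gamma (ν * k + β))) with hF
  have hppos : ∀ k : ℕ, (0:ℝ) < ν * k + β := fun k => by positivity
  have hGpos : ∀ k : ℕ, 0 < Real.Gamma (ν * k + β) := fun k =>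
    Real.Gamma_pos_of_pos (hppos k)
  have hmeas : ∀ k, AEStronglyMeasurable (F k) μ := by
    intro k
    apply Measurable.aestronglyMeasurable
    fun_prop
  -- pointwise rewriting on Ioi 0
  have hEq : ∀ k : ℕ, Set.EqOn (F k)
      (fun t => (a ^ k / Real.Gamma (ν * k + β)) *
        (t ^ (ν * k + β - 1) * Real.exp (-(s * t)))) (Set.Ioi 0) := by
    intro k t ht
    have ht0 : (0:ℝ) < t := ht
    have h1 : (a * t ^ ν) ^ k = a ^ k * t ^ (ν * k) := by
      rw [mul_pow, ← Real.rpow_natCast (t ^ ν) k, ← Real.rpow_mul ht0.le]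
    have h2 : t ^ (β - 1) * t ^ (ν * (k:ℝ)) = t ^ (ν * k + β - 1) := by
      rw [← Real.rpow_add ht0]
      congr 1
      ring
    simp only [hF, h1, neg_mul]
    rw [← h2]
    ring
  have hInt : ∀ k, IntegrableOn (F k) (Set.Ioi 0) := by
    intro k
    have h2 : IntegrableOn (fun t : ℝ => (a ^ k / Real.Gamma (ν * k + β)) *
        (t ^ (ν * k + β - 1) * Real.exp (-(s * t)))) (Set.Ioi 0) :=
      (integrableOn_rpow_mul_exp_neg (hppos k) hs).const_mul _
    exact MeasureTheory.IntegrableOn.congr_fun h2 (hEq k).symm measurableSet_Ioi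
  have hIval : ∀ k : ℕ, ∫ t in Set.Ioi (0:ℝ), F k t = a ^ k * (1/s) ^ (ν * k + β) := by
    intro k
    rw [setIntegral_congr_fun measurableSet_Ioi (hEq k), integral_const_mul,
        integral_rpow_mul_exp_neg_mul_Ioi (hppos k) hs]
    field_simp
  have hEqn : ∀ k : ℕ, Set.EqOn (fun t => ‖F k t‖)
      (fun t => (|a| ^ k / Real.Gamma (ν * k + β)) *
        (t ^ (ν * k + β - 1) * Real.exp (-(s * t)))) (Set.Ioi 0) := by
    intro k t ht
    have ht0 : (0:ℝ) < t := ht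
    simp only [Real.norm_eq_abs]
    rw [hEq k ht, abs_mul, abs_div, abs_pow, abs_of_pos (hGpos k),
      abs_of_pos (by positivity : (0:ℝ) < t ^ (ν * k + β - 1) * Real.exp (-(s * t)))]
  have hnval : ∀ k : ℕ, ∫ t in Set.Ioi (0:ℝ), ‖F k t‖ = |a| ^ k * (1/s) ^ (ν * k + β) := by
    intro k
    rw [setIntegral_congr_fun measurableSet_Ioi (hEqn k), integral_const_mul,
        integral_rpow_mul_exp_neg_mul_Ioi (hppos k) hs]
    field_simp
  -- summability of the integrals of the norms
  have hsν : (0:ℝ) < s ^ ν := Real.rpow_pos_of_pos hs ν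
  have hr0 : (0:ℝ) ≤ |a| * (1/s) ^ ν := by positivity
  have hr : |a| * (1/s) ^ ν < 1 := by
    rw [one_div, Real.inv_rpow hs.le, ← div_eq_mul_inv]
    exact (div_lt_one hsν).2 hsa
  have hck : ∀ (b : ℝ) (k : ℕ), b ^ k * (1/s) ^ (ν * k + β)
      = (1/s) ^ β * (b * (1/s) ^ ν) ^ k := by
    intro b k
    have h1 : (1/s:ℝ) ^ (ν * (k:ℝ) + β) = ((1/s) ^ ν) ^ (k:ℕ) * (1/s) ^ β := by
      rw [Real.rpow_add (by positivity), Real.rpow_mul (by positivity), Real.rpow_natCast]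
    rw [h1, mul_pow]
    ring
  have hcsum : Summable (fun k : ℕ => |a| ^ k * (1/s) ^ (ν * k + β)) := by
    simp_rw [hck |a|]
    exact (summable_geometric_of_lt_one hr0 hr).mul_left _
  have hlint : ∀ k : ℕ, ∫⁻ t, ‖F k t‖₊ ∂μ
      = ENNReal.ofReal (|a| ^ k * (1/s) ^ (ν * k + β)) := by
    intro k
    show ∫⁻ t in Set.Ioi 0, ‖F k t‖ₑ = _
    rw [← ofReal_integral_norm_eq_lintegral_enorm (hInt k), hnval k]
  have htop : ∑' k, ∫⁻ t, ‖F k t‖₊ ∂μ ≠ ⊤ := by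
    simp_rw [hlint]
    rw [← ENNReal.ofReal_tsum_of_nonneg (fun k => by positivity) hcsum]
    exact ENNReal.ofReal_ne_top
  -- a.e. summability of the norms
  have hae : ∀ᵐ t ∂μ, Summable fun k => ‖F k t‖ := by
    have h1 : ∫⁻ t, ∑' k, (‖F k t‖₊ : ENNReal) ∂μ ≠ ⊤ := by
      show ∫⁻ t, ∑' k, ‖F k t‖ₑ ∂μ ≠ ⊤
      rwa [lintegral_tsum (fun k => (hmeas k).enorm)]
    filter_upwards [ae_lt_top' (AEMeasurable.ennreal_tsum fun k => (hmeas k).enorm) h1]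
      with t ht
    have := ENNReal.tsum_coe_ne_top_iff_summable_coe.mp ht.ne
    simpa [coe_nnnorm] using this
  -- the target function is the tsum of the F's
  have hfun : (fun t : ℝ => Real.exp (-s * t) * (t ^ (β - 1) * mittagLeffler ν β (a * t ^ ν)))
      = fun t => ∑' k, F k t := by
    funext t
    simp only [mittagLeffler, hF]
    rw [tsum_mul_left, tsum_mul_left]
  rw [hfun]
  -- integrability of the tsum
  have hAESM : AEStronglyMeasurable (fun t => ∑' k, F k t) μ := by
    refine aestronglyMeasurable_of_tendsto_ae Filter.atTop
      (fun n : ℕ => (Finset.range n).aestronglyMeasurable_sum (fun k _ => hmeas k)) ?_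
    filter_upwards [hae] with t ht
    simpa only [Finset.sum_apply] using ht.of_norm.hasSum.tendsto_sum_nat
  have hFin : HasFiniteIntegral (fun t => ∑' k, F k t) μ := by
    show ∫⁻ t, (‖∑' k, F k t‖₊ : ENNReal) ∂μ < ⊤
    calc ∫⁻ t, ‖∑' k, F k t‖₊ ∂μ
        ≤ ∫⁻ t, ∑' k, (‖F k t‖₊ : ENNReal) ∂μ := by
          apply lintegral_mono_ae
          filter_upwards [hae] with t ht
          have ht' : Summable fun k => ‖F k t‖₊ :=
            NNReal.summable_coe.mp (by simpa [coe_nnnorm] using ht)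
          calc (‖∑' k, F k t‖₊ : ENNReal)
              ≤ ((∑' k, ‖F k t‖₊ : NNReal) : ENNReal) :=
                ENNReal.coe_le_coe.2 (nnnorm_tsum_le ht')
            _ = ∑' k, (‖F k t‖₊ : ENNReal) := ENNReal.coe_tsum ht'
      _ = ∑' k, ∫⁻ t, ‖F k t‖₊ ∂μ := lintegral_tsum (fun k => (hmeas k).enorm)
      _ < ⊤ := htop.lt_top
  refine ⟨⟨hAESM, hFin⟩, ?_⟩
  -- compute the integral
  rw [MeasureTheory.integral_tsum hmeas htop, tsum_congr hIval]
  simp_rw [hck a]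
  rw [tsum_mul_left, tsum_geometric_of_norm_lt_one
    (by rw [Real.norm_eq_abs, abs_mul, abs_of_nonneg (by positivity : (0:ℝ) ≤ (1/s) ^ ν)]; exact hr)]
  have hne : s ^ ν - a ≠ 0 := by
    have h := (abs_lt.mp hsa).2
    intro h0
    linarith
  have hsβ : (0:ℝ) < s ^ β := Real.rpow_pos_of_pos hs β
  rw [one_div, Real.inv_rpow hs.le, Real.inv_rpow hs.le, Real.rpow_sub hs]
  field_simp
end

section
/- Let β > 0, a ∈ ℝ, and let s > 0 satisfy s^β > |a|. Then ∫_0^∞ e^(-st) E_β(-a t^β) dt = s^(β-1) / (s^β + a), and in particular the integral converges absolutely. -/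
set_option maxHeartbeats 1000000
open MeasureTheory Real Finset

lemma sum_range_mul_div (m n : ℕ) (hm : 0 < m) (f : ℕ → ℝ) :
    ∑ k ∈ range (m * n), f (k / m) = m * ∑ q ∈ range n, f q := by
  induction n with
  | zero => simp
  | succ n ih =>
    rw [Nat.mul_succ, Finset.sum_range_add, ih, Finset.sum_range_succ, mul_add]
    congr 1
    have : ∀ i ∈ range m, f ((m * n + i) / m) = f n := by
      intro i hi
      rw [Finset.mem_range] at hi
      congr 1
      rw [Nat.mul_add_div hm, Nat.div_eq_of_lt hi, Nat.add_zero]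
    rw [Finset.sum_congr rfl this, Finset.sum_const, Finset.card_range, nsmul_eq_mul]

lemma summable_comp_div {f : ℕ → ℝ} (hf : Summable f) (h0 : ∀ n, 0 ≤ f n) (m : ℕ) (hm : 0 < m) :
    Summable fun k => f (k / m) := by
  apply summable_of_sum_range_le (c := m * ∑' q, f q) (fun k => h0 _)
  intro n
  calc ∑ k ∈ range n, f (k / m)
      ≤ ∑ k ∈ range (m * n), f (k / m) :=
        Finset.sum_le_sum_of_subset_of_nonneg
          (Finset.range_subset_range.mpr (Nat.le_mul_of_pos_left n hm)) (fun _ _ _ => h0 _)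
    _ = m * ∑ q ∈ range n, f q := sum_range_mul_div m n hm f
    _ ≤ m * ∑' q, f q := by
        gcongr
        exact Summable.sum_le_tsum _ (fun i _ => h0 i) hf

lemma summable_ml (β : ℝ) (hβ : 0 < β) (x : ℝ) :
    Summable fun k : ℕ => x ^ k / Real.Gamma (β * k + 1) := by
  set m : ℕ := ⌈1 / β⌉₊ + 1 with hm
  have hm0 : 0 < m := Nat.succ_pos _
  have hmβ : 1 / (m : ℝ) ≤ β := by
    rw [div_le_iff₀ (by positivity)]
    have h1 : 1 / β ≤ (m : ℝ) := le_trans (Nat.le_ceil _) (by push_cast [hm]; linarith)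
    calc (1:ℝ) = β * (1/β) := by field_simp
      _ ≤ β * m := by gcongr
  set c : ℝ := max |x| 1 with hc
  have hc1 : (1:ℝ) ≤ c := le_max_right _ _
  have hxc : |x| ≤ c := le_max_left _ _
  set C : ℝ := c ^ m with hC
  have hC1 : (1:ℝ) ≤ C := one_le_pow₀ hc1
  rw [← summable_nat_add_iff (2 * m)]
  have hsum : Summable fun k : ℕ => C * (C ^ ((k + 2*m) / m) / (Nat.factorial ((k + 2*m) / m) : ℝ)) := by
    refine Summable.mul_left C ?_
    exact (summable_nat_add_iff (2 * m)).mpr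
      (summable_comp_div (Real.summable_pow_div_factorial C)
        (fun q => by positivity) m hm0)
  refine Summable.of_norm_bounded hsum ?_
  intro n
  set k := n + 2 * m with hk
  set q := k / m with hq
  have hq2 : 2 ≤ q := by
    rw [hq, Nat.le_div_iff_mul_le hm0]; omega
  have hΓpos : 0 < Real.Gamma (β * k + 1) := by
    apply Real.Gamma_pos_of_pos; positivity
  have hfac : ((Nat.factorial q : ℕ) : ℝ) ≤ Real.Gamma (β * k + 1) := by
    rw [← Real.Gamma_nat_eq_factorial]
    have h1 : (2:ℝ) ≤ (q:ℝ) + 1 := by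
      have := (Nat.cast_le (α := ℝ)).mpr hq2; push_cast at this ⊢; linarith
    have h2 : ((q:ℝ) + 1) ≤ β * k + 1 := by
      have : (q:ℝ) ≤ β * k := by
        calc (q:ℝ) ≤ (k:ℝ) / m := Nat.cast_div_le
          _ = (k:ℝ) * (1 / m) := by ring
          _ ≤ (k:ℝ) * β := mul_le_mul_of_nonneg_left hmβ (by positivity)
          _ = β * k := mul_comm _ _
      linarith
    push_cast
    exact Real.Gamma_strictMonoOn_Ici.monotoneOn (by simpa using h1)
      (Set.mem_Ici.mpr (le_trans h1 h2)) h2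
  have hpow : |x| ^ k ≤ C * C ^ q := by
    have hkle : k ≤ m * (q + 1) := by
      rw [mul_comm]
      exact le_of_lt ((Nat.div_lt_iff_lt_mul hm0).1 (hq ▸ Nat.lt_succ_self q))
    calc |x| ^ k ≤ c ^ k := pow_le_pow_left₀ (abs_nonneg x) hxc k
      _ ≤ c ^ (m * (q + 1)) := pow_le_pow_right₀ hc1 hkle
      _ = C ^ (q + 1) := by rw [hC, ← pow_mul, mul_comm]
      _ = C * C ^ q := by ring
  rw [Real.norm_eq_abs, abs_div, abs_of_pos hΓpos, abs_pow]
  rw [div_le_iff₀ hΓpos]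
  calc |x| ^ k ≤ C * C ^ q := hpow
    _ = (C * (C ^ q / (Nat.factorial q : ℝ))) * (Nat.factorial q : ℝ) := by
        field_simp
    _ ≤ (C * (C ^ q / (Nat.factorial q : ℝ))) * Real.Gamma (β * k + 1) := by
        gcongr

lemma exp_rpow_integral (s p : ℝ) (hs : 0 < s) (hp : 0 ≤ p) :
    IntegrableOn (fun t : ℝ => t ^ p * Real.exp (-(s * t))) (Set.Ioi 0) ∧
    ∫ t in Set.Ioi (0:ℝ), t ^ p * Real.exp (-(s * t)) = (1/s) ^ (p+1) * Real.Gamma (p+1) := by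
  constructor
  · have := integrableOn_rpow_mul_exp_neg_mul_rpow (p := 1) (s := p) (b := s)
      (by linarith) one_pos hs
    refine this.congr_fun (fun t ht => ?_) measurableSet_Ioi
    beta_reduce
    rw [Real.rpow_one, neg_mul]
  · have := Real.integral_rpow_mul_exp_neg_mul_Ioi (a := p + 1) (r := s) (by linarith) hs
    rw [← this]
    refine setIntegral_congr_fun measurableSet_Ioi (fun t ht => ?_)
    rw [add_sub_cancel_right]

lemma integrable_tsum'' {F : ℕ → ℝ → ℝ} {μ : Measure ℝ}
    (hF_int : ∀ i, Integrable (F i) μ)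
    (hF_sum : Summable fun i => ∫ a, ‖F i a‖ ∂μ) :
    Integrable (fun a => ∑' i, F i a) μ := by
  have hf'' : ∀ i, AEMeasurable (fun x => (‖F i x‖₊ : ENNReal)) μ := fun i =>
    (hF_int i).1.enorm
  have hf' : ∑' i, ∫⁻ a, ‖F i a‖₊ ∂μ ≠ ⊤ := by
    have h1 : ∀ i, ∫⁻ a, ‖F i a‖₊ ∂μ = ENNReal.ofReal (∫ a, ‖F i a‖ ∂μ) := fun i =>
      (ofReal_integral_norm_eq_lintegral_enorm (hF_int i)).symm
    rw [funext h1, ← ENNReal.ofReal_tsum_of_nonneg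
      (fun i => integral_nonneg fun a => norm_nonneg _) hF_sum]
    exact ENNReal.ofReal_ne_top
  have hhh : ∀ᵐ a ∂μ, Summable fun n => (‖F n a‖₊ : NNReal) := by
    rw [← lintegral_tsum hf''] at hf'
    refine (ae_lt_top' (AEMeasurable.ennreal_tsum hf'') hf').mono fun x hx => ?_
    rw [← ENNReal.tsum_coe_ne_top_iff_summable]
    exact hx.ne
  have hsummable : ∀ᵐ a ∂μ, Summable fun n => F n a := by
    filter_upwards [hhh] with x hx
    have : Summable fun n => ‖F n x‖ := by
      have := NNReal.summable_coe.2 hx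
      simpa [coe_nnnorm] using this
    exact this.of_norm
  have hmeas : AEStronglyMeasurable (fun a => ∑' i, F i a) μ := by
    refine aestronglyMeasurable_of_tendsto_ae Filter.atTop
      (fun n => Finset.aestronglyMeasurable_sum (range n) fun i _ => (hF_int i).1) ?_
    filter_upwards [hsummable] with x hx
    simpa only [Finset.sum_apply] using hx.hasSum.tendsto_sum_nat
  refine ⟨hmeas, ?_⟩
  rw [HasFiniteIntegral]
  calc ∫⁻ a, ‖∑' i, F i a‖₊ ∂μ
      ≤ ∫⁻ a, ∑' i, (‖F i a‖₊ : ENNReal) ∂μ := by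
        refine lintegral_mono_ae ?_
        filter_upwards [hhh] with x hx
        rw [← ENNReal.coe_tsum hx]
        exact_mod_cast ENNReal.coe_le_coe.2 (nnnorm_tsum_le hx)
    _ = ∑' i, ∫⁻ a, ‖F i a‖₊ ∂μ := lintegral_tsum hf''
    _ < ⊤ := hf'.lt_top

/-- Laplace transform of `t ↦ E_β(-a t^β)`:
it is absolutely integrable and equals `s^(β-1) / (s^β + a)` for `s^β > |a|`. -/
theorem laplace_mittagLeffler_one_param (β a s : ℝ) (hβ : 0 < β)
    (hs : 0 < s) (hsa : |a| < s ^ β) :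
    IntegrableOn
      (fun t : ℝ => Real.exp (-s * t) * mittagLeffler β 1 (-a * t ^ β)) (Set.Ioi 0) ∧
    ∫ t in Set.Ioi (0:ℝ), Real.exp (-s * t) * mittagLeffler β 1 (-a * t ^ β)
      = s ^ (β - 1) / (s ^ β + a) := by
  have hsβ : 0 < s ^ β := rpow_pos_of_pos hs β
  have hΓpos : ∀ k : ℕ, 0 < Real.Gamma (β * k + 1) := fun k =>
    Real.Gamma_pos_of_pos (by positivity)
  set F : ℕ → ℝ → ℝ := fun k t =>
    ((-a) ^ k / Real.Gamma (β * k + 1)) * (t ^ (β * (k:ℕ)) * Real.exp (-(s * t))) with hF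
  have hFint : ∀ k, IntegrableOn (F k) (Set.Ioi 0) := fun k =>
    ((exp_rpow_integral s (β * k) hs (by positivity)).1.const_mul _)
  have hFval : ∀ k, ∫ t in Set.Ioi (0:ℝ), F k t = (-a) ^ k * (1/s) ^ (β * k + 1) := by
    intro k
    rw [hF]
    rw [MeasureTheory.integral_const_mul, (exp_rpow_integral s (β * k) hs (by positivity)).2]
    field_simp
  have hFnorm : ∀ k, ∫ t in Set.Ioi (0:ℝ), ‖F k t‖ = |a| ^ k * (1/s) ^ (β * k + 1) := by
    intro k
    have heq : ∀ t ∈ Set.Ioi (0:ℝ), ‖F k t‖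
        = (|a| ^ k / Real.Gamma (β * k + 1)) * (t ^ (β * (k:ℕ)) * Real.exp (-(s * t))) := by
      intro t ht
      have ht0 : (0:ℝ) < t := ht
      rw [hF, norm_mul, norm_div, norm_pow, norm_neg, Real.norm_eq_abs,
        Real.norm_eq_abs, abs_of_pos (hΓpos k), Real.norm_eq_abs,
        abs_of_pos (by positivity : (0:ℝ) < t ^ (β * (k:ℕ)) * Real.exp (-(s * t)))]
    rw [setIntegral_congr_fun measurableSet_Ioi heq, MeasureTheory.integral_const_mul,
      (exp_rpow_integral s (β * k) hs (by positivity)).2]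
    field_simp
  have hpow : ∀ k : ℕ, ((1:ℝ)/s) ^ (β * k + 1) = (1/s) * ((1/s) ^ β) ^ k := by
    intro k
    rw [Real.rpow_add (by positivity), Real.rpow_one, Real.rpow_mul (by positivity),
      Real.rpow_natCast, mul_comm]
  have hinv : ((1:ℝ)/s) ^ β = (s ^ β)⁻¹ := by
    rw [one_div, Real.inv_rpow hs.le]
  have hrlt : ‖(-a) * ((1:ℝ)/s) ^ β‖ < 1 := by
    rw [Real.norm_eq_abs, abs_mul, abs_neg, hinv, abs_of_pos (by positivity : (0:ℝ) < (s ^ β)⁻¹)]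
    rw [← div_eq_mul_inv]
    exact (div_lt_one hsβ).2 hsa
  have hnormsum : Summable fun k => ∫ t in Set.Ioi (0:ℝ), ‖F k t‖ := by
    simp_rw [hFnorm, hpow]
    have hgeo : Summable fun k : ℕ => (|a| * ((1:ℝ)/s) ^ β) ^ k := by
      apply summable_geometric_of_lt_one (by positivity)
      calc |a| * ((1:ℝ)/s) ^ β = ‖(-a) * ((1:ℝ)/s) ^ β‖ := by
            rw [Real.norm_eq_abs, abs_mul, abs_neg, abs_of_pos (by positivity : (0:ℝ) < ((1:ℝ)/s) ^ β)]
        _ < 1 := hrlt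
    refine Summable.congr (hgeo.mul_left (1/s)) ?_
    intro k; rw [mul_pow]; ring
  have hptw : ∀ t ∈ Set.Ioi (0:ℝ),
      Real.exp (-s * t) * mittagLeffler β 1 (-a * t ^ β) = ∑' k, F k t := by
    intro t ht
    have ht0 : (0:ℝ) < t := ht
    rw [mittagLeffler, ← tsum_mul_left]
    refine tsum_congr fun k => ?_
    rw [hF, mul_pow, ← Real.rpow_natCast (t ^ β) k, ← Real.rpow_mul ht0.le, neg_mul s t]
    ring
  have hint : IntegrableOn
      (fun t : ℝ => Real.exp (-s * t) * mittagLeffler β 1 (-a * t ^ β)) (Set.Ioi 0) := by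
    have h1 : Integrable (fun t => ∑' k, F k t) (volume.restrict (Set.Ioi 0)) :=
      integrable_tsum'' hFint hnormsum
    refine h1.congr ?_
    refine (ae_restrict_iff' measurableSet_Ioi).2 ?_
    filter_upwards with t ht
    exact (hptw t ht).symm
  refine ⟨hint, ?_⟩
  rw [setIntegral_congr_fun measurableSet_Ioi hptw,
    ← integral_tsum_of_summable_integral_norm hFint hnormsum]
  simp_rw [hFval, hpow]
  have hsum2 : ∑' k : ℕ, (-a) ^ k * ((1/s) * (((1:ℝ)/s) ^ β) ^ k)
      = (1/s) * (1 - (-a) * ((1:ℝ)/s) ^ β)⁻¹ := by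
    calc ∑' k : ℕ, (-a) ^ k * ((1/s) * (((1:ℝ)/s) ^ β) ^ k)
        = ∑' k : ℕ, (1/s) * ((-a) * ((1:ℝ)/s) ^ β) ^ k :=
          tsum_congr fun k => by rw [mul_pow]; ring
      _ = (1/s) * ∑' k : ℕ, ((-a) * ((1:ℝ)/s) ^ β) ^ k := tsum_mul_left
      _ = (1/s) * (1 - (-a) * ((1:ℝ)/s) ^ β)⁻¹ := by
          rw [tsum_geometric_of_norm_lt_one hrlt]
  rw [hsum2, hinv]
  have hne : s ^ β + a ≠ 0 := by
    have := neg_lt_of_abs_lt hsa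
    linarith
  rw [Real.rpow_sub hs, Real.rpow_one]
  rw [show (1:ℝ) - -a * (s ^ β)⁻¹ = (s ^ β + a) / s ^ β by field_simp; ring]
  field_simp
end

section
/- Let β > 0 and let s be real with s + β < 1. Let f : (0,∞) → ℝ be measurable such that (x,t) ↦ x^(s-1) (x-t)^(β-1) |f(t)| is integrable on the region {0 < t < x}. Then ∫_0^∞ x^(s-1) [ (1/Γ(β)) ∫_0^x (x-t)^(β-1) f(t) dt ] dx = ( Γ(1−s−β) / Γ(1−s) ) · ∫_0^∞ t^(s+β-1) f(t) dt. -/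
open MeasureTheory Real

lemma real_beta {a b : ℝ} (ha : 0 < a) (hb : 0 < b) :
    ∫ x in Set.Ioo (0:ℝ) 1, x ^ (a-1) * (1-x) ^ (b-1)
      = Real.Gamma a * Real.Gamma b / Real.Gamma (a+b) := by
  have hab : Real.Gamma (a+b) ≠ 0 := (Real.Gamma_pos_of_pos (by linarith)).ne'
  have hβ := Complex.Gamma_mul_Gamma_eq_betaIntegral (s := (a:ℂ)) (t := (b:ℂ))
    (by simpa using ha) (by simpa using hb)
  have key : Complex.betaIntegral a b = ((∫ x in Set.Ioo (0:ℝ) 1, x ^ (a-1) * (1-x) ^ (b-1) : ℝ) : ℂ) := by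
    rw [Complex.betaIntegral, intervalIntegral.integral_of_le zero_le_one,
      MeasureTheory.integral_Ioc_eq_integral_Ioo]
    have : ∀ x ∈ Set.Ioo (0:ℝ) 1, (x:ℂ) ^ ((a:ℂ) - 1) * (1 - (x:ℂ)) ^ ((b:ℂ) - 1)
        = ((x ^ (a-1) * (1-x) ^ (b-1) : ℝ) : ℂ) := by
      intro x hx
      obtain ⟨hx0, hx1⟩ := hx
      rw [show ((a:ℂ)-1) = ((a-1:ℝ):ℂ) by push_cast; ring,
        show ((b:ℂ)-1) = ((b-1:ℝ):ℂ) by push_cast; ring,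
        show (1 - (x:ℂ)) = ((1-x:ℝ):ℂ) by push_cast; ring,
        ← Complex.ofReal_cpow hx0.le, ← Complex.ofReal_cpow (by linarith : (0:ℝ) ≤ 1 - x)]
      push_cast
      ring
    rw [setIntegral_congr_fun measurableSet_Ioo this]
    exact integral_ofReal
  rw [key, ← Complex.ofReal_add, Complex.Gamma_ofReal, Complex.Gamma_ofReal, Complex.Gamma_ofReal] at hβ
  have h2 : Real.Gamma a * Real.Gamma b
      = Real.Gamma (a+b) * ∫ x in Set.Ioo (0:ℝ) 1, x ^ (a-1) * (1-x) ^ (b-1) := by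
    exact_mod_cast hβ
  field_simp
  linarith

lemma inner_int {β s : ℝ} (hβ : 0 < β) (hs : s + β < 1) {t : ℝ} (ht : 0 < t) :
    ∫ x in Set.Ioi t, x ^ (s - 1) * (x - t) ^ (β - 1)
      = t ^ (s + β - 1) * (Real.Gamma (1 - s - β) * Real.Gamma β / Real.Gamma (1 - s)) := by
  have himg : (fun u : ℝ => t / u) '' Set.Ioo 0 1 = Set.Ioi t := by
    ext y
    constructor
    · rintro ⟨u, ⟨hu0, hu1⟩, rfl⟩
      exact Set.mem_Ioi.mpr ((lt_div_iff₀ hu0).mpr (by nlinarith))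
    · intro hy
      rw [Set.mem_Ioi] at hy
      exact ⟨t / y, ⟨div_pos ht (ht.trans hy), (div_lt_one (by linarith)).mpr hy⟩, by
        field_simp⟩
  have hderiv : ∀ u ∈ Set.Ioo (0:ℝ) 1,
      HasDerivWithinAt (fun u : ℝ => t / u) (-t / u ^ 2) (Set.Ioo 0 1) u := by
    intro u hu
    simpa [div_eq_mul_inv, neg_div, mul_comm] using
      ((hasDerivAt_inv hu.1.ne').const_mul t).hasDerivWithinAt
  have hinj : Set.InjOn (fun u : ℝ => t / u) (Set.Ioo 0 1) := by
    intro u1 h1 u2 h2 h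
    have h' : u1⁻¹ = u2⁻¹ :=
      mul_left_cancel₀ ht.ne' (by simpa [div_eq_mul_inv] using h)
    exact inv_injective h'
  rw [← himg, integral_image_eq_integral_abs_deriv_smul measurableSet_Ioo hderiv hinj]
  have hcong : ∀ u ∈ Set.Ioo (0:ℝ) 1,
      |(-t) / u ^ 2| • ((t / u) ^ (s - 1) * (t / u - t) ^ (β - 1))
        = t ^ (s + β - 1) * (u ^ (1 - s - β - 1) * (1 - u) ^ (β - 1)) := by
    intro u hu
    obtain ⟨hu0, hu1⟩ := hu
    have h1u : (0:ℝ) < 1 - u := by linarith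
    have habs : |(-t) / u ^ 2| = t / u ^ 2 := by
      rw [abs_div, abs_neg, abs_of_pos ht, abs_of_pos (by positivity)]
    have h2 : t / u - t = t * (1 - u) / u := by field_simp
    rw [smul_eq_mul, habs, h2, Real.div_rpow ht.le hu0.le,
      Real.div_rpow (by positivity) hu0.le, Real.mul_rpow ht.le h1u.le]
    rw [show (u:ℝ) ^ 2 = u ^ (2:ℝ) by rw [← Real.rpow_natCast u 2]; norm_num]
    rw [show (1:ℝ) - s - β - 1 = -(s - 1) + (-(β - 1) + -2) by ring,
      Real.rpow_add hu0, Real.rpow_add hu0, Real.rpow_neg hu0.le,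
      Real.rpow_neg hu0.le, Real.rpow_neg hu0.le,
      show s + β - 1 = (s - 1) + (β - 1) + 1 by ring,
      Real.rpow_add ht, Real.rpow_add ht, Real.rpow_one]
    have p1 := Real.rpow_pos_of_pos hu0 (s - 1)
    have p2 := Real.rpow_pos_of_pos hu0 (β - 1)
    have p3 := Real.rpow_pos_of_pos hu0 (2:ℝ)
    field_simp
  rw [setIntegral_congr_fun measurableSet_Ioo hcong, MeasureTheory.integral_const_mul,
    real_beta (by linarith) hβ, show (1:ℝ) - s - β + β = 1 - s by ring]


/-- Mellin transform of the Riemann–Liouville fractional integral: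
`M[I^β f](s) = (Γ(1−s−β)/Γ(1−s)) M[f](s+β)` for `s + β < 1`. -/
theorem mellin_rl_integral (β s : ℝ) (hβ : 0 < β) (hs : s + β < 1) (f : ℝ → ℝ)
    (hf : Measurable f)
    (hker : IntegrableOn
      (fun p : ℝ × ℝ => p.1 ^ (s - 1) * (p.1 - p.2) ^ (β - 1) * |f p.2|)
      {p : ℝ × ℝ | 0 < p.2 ∧ p.2 < p.1}) :
    ∫ x in Set.Ioi (0:ℝ),
        x ^ (s - 1) * ((1 / Real.Gamma β) * ∫ t in (0:ℝ)..x, (x - t) ^ (β - 1) * f t)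
      = (Real.Gamma (1 - s - β) / Real.Gamma (1 - s)) *
        ∫ t in Set.Ioi (0:ℝ), t ^ (s + β - 1) * f t := by
  set C := Real.Gamma (1 - s - β) * Real.Gamma β / Real.Gamma (1 - s) with hC
  set F : ℝ × ℝ → ℝ := fun p => p.1 ^ (s - 1) * (p.1 - p.2) ^ (β - 1) * f p.2 with hFdef
  set S : Set (ℝ × ℝ) := {p : ℝ × ℝ | 0 < p.2 ∧ p.2 < p.1} with hSdef
  have hS : MeasurableSet S :=
    (measurableSet_lt measurable_const measurable_snd).inter
      (measurableSet_lt measurable_snd measurable_fst)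
  have hFm : Measurable F := by fun_prop
  have hFi : IntegrableOn F S := by
    refine hker.mono' hFm.aestronglyMeasurable.restrict ?_
    rw [ae_restrict_iff' hS]
    refine Filter.Eventually.of_forall fun p hp => ?_
    have h1 : 0 < p.1 := lt_trans hp.1 hp.2
    have h2 : 0 < p.1 - p.2 := sub_pos.mpr hp.2
    have e1 : (0:ℝ) ≤ p.1 ^ (s - 1) := Real.rpow_nonneg h1.le _
    have e2 : (0:ℝ) ≤ (p.1 - p.2) ^ (β - 1) := Real.rpow_nonneg h2.le _
    simp only [hFdef, Real.norm_eq_abs, abs_mul, abs_of_nonneg e1, abs_of_nonneg e2, le_refl]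
  have hGi : Integrable (S.indicator F) := (integrable_indicator_iff hS).mpr hFi
  have swap : (∫ x : ℝ, ∫ t : ℝ, S.indicator F (x, t)) = ∫ t : ℝ, ∫ x : ℝ, S.indicator F (x, t) :=
    MeasureTheory.integral_integral_swap (by exact hGi)
  have sec1 : ∀ x : ℝ, (∫ t : ℝ, S.indicator F (x, t)) = ∫ t in Set.Ioo 0 x, F (x, t) := by
    intro x
    have h1 : (fun t : ℝ => S.indicator F (x, t)) = (Set.Ioo 0 x).indicator fun t => F (x, t) := by
      funext t
      simp only [Set.indicator_apply, hSdef, Set.mem_setOf_eq, Set.mem_Ioo]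
    rw [h1, integral_indicator measurableSet_Ioo]
  have sec2 : ∀ t : ℝ, 0 < t → (∫ x : ℝ, S.indicator F (x, t)) = ∫ x in Set.Ioi t, F (x, t) := by
    intro t ht
    have h1 : (fun x : ℝ => S.indicator F (x, t)) = (Set.Ioi t).indicator fun x => F (x, t) := by
      funext x
      simp only [Set.indicator_apply, hSdef, Set.mem_setOf_eq, Set.mem_Ioi, ht, true_and]
    rw [h1, integral_indicator measurableSet_Ioi]
  have sec2' : ∀ t : ℝ, t ≤ 0 → (∫ x : ℝ, S.indicator F (x, t)) = 0 := by
    intro t ht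
    have : ∀ x : ℝ, S.indicator F (x, t) = 0 := fun x =>
      Set.indicator_of_notMem (by simp only [hSdef, Set.mem_setOf_eq, not_and]; intro h; linarith) _
    simp [this]
  have lhs1 : (∫ x in Set.Ioi (0:ℝ),
        x ^ (s - 1) * ((1 / Real.Gamma β) * ∫ t in (0:ℝ)..x, (x - t) ^ (β - 1) * f t))
      = (1 / Real.Gamma β) * ∫ x in Set.Ioi (0:ℝ), ∫ t in Set.Ioo 0 x, F (x, t) := by
    rw [← MeasureTheory.integral_const_mul]
    refine setIntegral_congr_fun measurableSet_Ioi fun x hx => ?_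
    rw [Set.mem_Ioi] at hx
    rw [intervalIntegral.integral_of_le hx.le, MeasureTheory.integral_Ioc_eq_integral_Ioo]
    rw [show (∫ t in Set.Ioo (0:ℝ) x, F (x, t))
        = ∫ t in Set.Ioo (0:ℝ) x, x ^ (s - 1) * ((x - t) ^ (β - 1) * f t) from
      setIntegral_congr_fun measurableSet_Ioo fun t _ => by simp only [hFdef]; ring,
      MeasureTheory.integral_const_mul]
    ring
  have lhs2 : (∫ x in Set.Ioi (0:ℝ), ∫ t in Set.Ioo 0 x, F (x, t))
      = ∫ x : ℝ, ∫ t : ℝ, S.indicator F (x, t) := by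
    rw [setIntegral_congr_fun measurableSet_Ioi fun x (_ : x ∈ Set.Ioi (0:ℝ)) => (sec1 x).symm]
    refine setIntegral_eq_integral_of_forall_compl_eq_zero fun x hx => ?_
    rw [sec1, Set.Ioo_eq_empty (by simpa using hx)]
    simp
  have rhs1 : (∫ t : ℝ, ∫ x : ℝ, S.indicator F (x, t))
      = ∫ t in Set.Ioi (0:ℝ), t ^ (s + β - 1) * C * f t := by
    rw [← setIntegral_eq_integral_of_forall_compl_eq_zero
      (fun t (ht : t ∉ Set.Ioi (0:ℝ)) => sec2' t (le_of_not_gt (by simpa using ht)))]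
    refine setIntegral_congr_fun measurableSet_Ioi fun t ht => ?_
    rw [Set.mem_Ioi] at ht
    rw [sec2 t ht,
      show (∫ x in Set.Ioi t, F (x, t))
        = (∫ x in Set.Ioi t, x ^ (s - 1) * (x - t) ^ (β - 1)) * f t from by
          rw [← MeasureTheory.integral_mul_const],
      inner_int hβ hs ht]
  have hΓβ : Real.Gamma β ≠ 0 := (Real.Gamma_pos_of_pos hβ).ne'
  rw [lhs1, lhs2, swap, rhs1,
    show (∫ t in Set.Ioi (0:ℝ), t ^ (s + β - 1) * C * f t)
      = C * ∫ t in Set.Ioi (0:ℝ), t ^ (s + β - 1) * f t from by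
        rw [← MeasureTheory.integral_const_mul]
        exact setIntegral_congr_fun measurableSet_Ioi fun t _ => by ring,
    ← mul_assoc]
  congr 1
  have hΓ1s : Real.Gamma (1 - s) ≠ 0 := (Real.Gamma_pos_of_pos (by linarith)).ne'
  rw [hC]
  field_simp
end

section
/- Let 0 < β < 1, λ ∈ ℝ, and define y(t) = t^(β-1) E_{β,β}(λ t^β) for t > 0. Then for every x > 0: (i) (1/Γ(1-β)) ∫_0^x (x-t)^(-β) y(t) dt = Γ(1-β)⁻¹·Γ(1-β)·E_β(λ x^β) = E_β(λ x^β); and (ii) the function x ↦ (1/Γ(1-β)) ∫_0^x (x-t)^(-β) y(t) dt has derivative at x equal to λ y(x). That is, y satisfies the Riemann–Liouville fractional differential equation D^β y = λ y on (0,∞). -/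
open MeasureTheory Real

open Filter

lemma gamma_ratio {β x : ℝ} (hβ0 : 0 < β) (hβ1 : β < 1) (hx : 0 < x) :
    Gamma (x + 1) ≤ Gamma (x + β) * (x + β) ^ (1 - β) := by
  have hxβ : 0 < x + β := by linarith
  have hxβ1 : 0 < x + β + 1 := by linarith
  have hG1 : 0 < Gamma (x + β) := Gamma_pos_of_pos hxβ
  have hconv := convexOn_log_Gamma.2 (Set.mem_Ioi.2 hxβ) (Set.mem_Ioi.2 hxβ1)
    (le_of_lt hβ0) (by linarith : (0:ℝ) ≤ 1 - β) (by ring)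
  have hcomb : β • (x + β) + (1 - β) • (x + β + 1) = x + 1 := by
    simp [smul_eq_mul]; ring
  rw [hcomb] at hconv
  have hrec : Gamma (x + β + 1) = (x + β) * Gamma (x + β) := Gamma_add_one hxβ.ne'
  have hlog : Real.log (Gamma (x + 1)) ≤
      Real.log (Gamma (x + β)) + (1 - β) * Real.log (x + β) := by
    have := hconv
    simp only [Function.comp, smul_eq_mul] at this
    rw [hrec, Real.log_mul hxβ.ne' hG1.ne'] at this
    nlinarith [this]
  have hG2 : 0 < Gamma (x + 1) := Gamma_pos_of_pos (by linarith)
  have := Real.exp_le_exp.2 hlog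
  rwa [Real.exp_log hG2, Real.exp_add, Real.exp_log hG1,
    mul_comm (1-β) _, ← Real.rpow_def_of_pos hxβ] at this

lemma summable_aux {β : ℝ} (hβ0 : 0 < β) (hβ1 : β < 1) (c M : ℝ) (hc : 0 < c) (hM : 0 ≤ M) :
    Summable (fun k : ℕ => ((k:ℝ) + 1) * M ^ k / Gamma (β * k + c)) := by
  apply summable_of_ratio_norm_eventually_le (r := 1/2) (by norm_num)
  have htend : Tendsto (fun k : ℕ => (β * k + c) ^ β) atTop atTop := by
    apply (tendsto_rpow_atTop hβ0).comp
    apply Tendsto.atTop_add _ tendsto_const_nhds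
    exact Tendsto.const_mul_atTop hβ0 tendsto_natCast_atTop_atTop
  have h2 : ∀ᶠ k : ℕ in atTop, (16 * M + 16) ≤ (β * k + c) ^ β :=
    htend.eventually_ge_atTop _
  have h3 : ∀ᶠ k : ℕ in atTop, (β : ℝ) ≤ β * k + c := by
    filter_upwards [Filter.eventually_ge_atTop 1] with k hk
    have : (1:ℝ) ≤ (k:ℝ) := by exact_mod_cast hk
    nlinarith
  filter_upwards [h2, h3] with k hk hk3
  set x := β * k + c with hxdef
  have hx : 0 < x := by positivity
  have hGx : 0 < Gamma x := Gamma_pos_of_pos hx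
  have hGxβ : 0 < Gamma (x + β) := Gamma_pos_of_pos (by linarith)
  have key := gamma_ratio hβ0 hβ1 hx
  rw [Gamma_add_one hx.ne'] at key
  have hxβpos : (0:ℝ) < x ^ β := rpow_pos_of_pos hx β
  have h1b : (0:ℝ) ≤ 1 - β := by linarith
  have hb1 : (x + β) ^ (1-β) ≤ (2*x) ^ (1-β) :=
    rpow_le_rpow (by linarith) (by linarith) h1b
  have h2x : (2*x) ^ (1-β) ≤ 2 * x ^ (1-β) := by
    rw [Real.mul_rpow (by norm_num) hx.le]
    have : (2:ℝ) ^ (1-β) ≤ 2 := by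
      calc (2:ℝ) ^ (1-β) ≤ 2 ^ (1:ℝ) :=
            Real.rpow_le_rpow_of_exponent_le (by norm_num) (by linarith)
      _ = 2 := by norm_num
    nlinarith [rpow_nonneg hx.le (1-β)]
  have hxsplit : x ^ (1-β) = x / x ^ β := by
    rw [eq_div_iff hxβpos.ne', ← Real.rpow_add hx]
    simp
  have h5 : x * Gamma x ≤ Gamma (x+β) * (2*(x/x^β)) := by
    refine key.trans (mul_le_mul_of_nonneg_left ?_ hGxβ.le)
    rw [← hxsplit]; exact hb1.trans h2x
  have hG2 : Gamma x * x^β ≤ 2 * Gamma (x+β) := by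
    have h6 := mul_le_mul_of_nonneg_right h5 hxβpos.le
    have h7 : Gamma (x+β) * (2*(x/x^β)) * x^β = x * (2*Gamma (x+β)) := by
      field_simp
    rw [h7] at h6
    have h8 : x * (Gamma x * x^β) ≤ x * (2*Gamma (x+β)) := by nlinarith [h6]
    exact le_of_mul_le_mul_left h8 hx
  have h8 : 8*(M+1)*Gamma x ≤ Gamma (x+β) := by
    nlinarith [mul_le_mul_of_nonneg_left hk hGx.le]
  have hxeq : β*((k:ℝ)+1)+c = x+β := by rw [hxdef]; ring
  have hMk : (0:ℝ) ≤ M^k := pow_nonneg hM k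
  push_cast
  rw [hxeq]
  rw [Real.norm_of_nonneg (by positivity), Real.norm_of_nonneg (by positivity)]
  have hR : (1:ℝ)/2 * (((k:ℝ)+1) * M^k / Gamma x) = ((k:ℝ)+1)*M^k/(2*Gamma x) := by ring
  rw [hR, div_le_div_iff₀ hGxβ (by positivity)]
  have hMpow : M^(k+1) = M^k * M := pow_succ M k
  rw [hMpow]
  have hk0 : (0:ℝ) ≤ (k:ℝ) := Nat.cast_nonneg k
  have hscalar : ((k:ℝ)+2)*2*M ≤ ((k:ℝ)+1)*8*(M+1) := by nlinarith [mul_nonneg hk0 hM]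
  calc ((k:ℝ)+1+1)*(M^k*M)*(2*Gamma x) = (((k:ℝ)+2)*2*M) * (M^k * Gamma x) := by ring
    _ ≤ (((k:ℝ)+1)*8*(M+1)) * (M^k * Gamma x) :=
        mul_le_mul_of_nonneg_right hscalar (mul_nonneg hMk hGx.le)
    _ = ((k:ℝ)+1)*M^k * (8*(M+1)*Gamma x) := by ring
    _ ≤ ((k:ℝ)+1)*M^k * Gamma (x+β) := mul_le_mul_of_nonneg_left h8 (by positivity)

lemma summable_aux' {β : ℝ} (hβ0 : 0 < β) (hβ1 : β < 1) (c M : ℝ) (hc : 0 < c) (hM : 0 ≤ M) :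
    Summable (fun k : ℕ => M ^ k / Gamma (β * k + c)) := by
  refine (summable_aux hβ0 hβ1 c M hc hM).of_nonneg_of_le (fun k => ?_) (fun k => ?_)
  · have := Gamma_pos_of_pos (show (0:ℝ) < β*k+c by positivity)
    positivity
  · have hG := Gamma_pos_of_pos (show (0:ℝ) < β*k+c by positivity)
    gcongr
    nlinarith [pow_nonneg hM k, Nat.cast_nonneg (α := ℝ) k]


lemma rpow_bound_on {a K t x : ℝ} (hx : 0 < x) (ht1 : x/2 ≤ t) (ht2 : t ≤ x)
    (hK : K = (x/2)^(a-1) + x^(a-1)) : t^(a-1) ≤ K := by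
  have h2 : 0 < x/2 := by linarith
  rcases le_or_gt 0 (a-1) with h | h
  · have : t^(a-1) ≤ x^(a-1) := rpow_le_rpow (by linarith) ht2 h
    have h0 : 0 ≤ (x/2)^(a-1) := rpow_nonneg h2.le _
    linarith
  · have : t^(a-1) ≤ (x/2)^(a-1) := rpow_le_rpow_of_nonpos h2 ht1 h.le
    have h0 : 0 ≤ x^(a-1) := rpow_nonneg hx.le _
    linarith

lemma beta_integrable {a b x : ℝ} (ha : 0 < a) (hb : 0 < b) (hx : 0 < x) :
    IntervalIntegrable (fun t : ℝ => t^(a-1)*(x-t)^(b-1)) volume 0 x := by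
  set Ka : ℝ := (x/2)^(a-1) + x^(a-1) with hKa
  set Kb : ℝ := (x/2)^(b-1) + x^(b-1) with hKb
  have hg1 : IntervalIntegrable (fun t : ℝ => Kb * t^(a-1)) volume 0 x :=
    (intervalIntegral.intervalIntegrable_rpow' (by linarith)).const_mul Kb
  have hg2 : IntervalIntegrable (fun t : ℝ => Ka * (x-t)^(b-1)) volume 0 x := by
    have h0 : IntervalIntegrable (fun u : ℝ => u^(b-1)) volume 0 x :=
      intervalIntegral.intervalIntegrable_rpow' (by linarith)
    have := (h0.comp_sub_left x).const_mul Ka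
    simpa using this.symm
  have hg : IntervalIntegrable (fun t : ℝ => Kb * t^(a-1) + Ka * (x-t)^(b-1)) volume 0 x :=
    hg1.add hg2
  refine hg.mono_fun' ?_ ?_
  · apply Measurable.aestronglyMeasurable
    fun_prop
  · rw [Filter.EventuallyLE, ae_restrict_iff' measurableSet_uIoc]
    filter_upwards with t ht
    rw [Set.uIoc_of_le hx.le] at ht
    obtain ⟨ht0, htx⟩ := ht
    have hxt : 0 ≤ x - t := by linarith
    have h1 : 0 ≤ t^(a-1) := rpow_nonneg ht0.le _
    have h2 : 0 ≤ (x-t)^(b-1) := rpow_nonneg hxt _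
    rw [Real.norm_of_nonneg (mul_nonneg h1 h2)]
    rcases le_or_gt t (x/2) with h | h
    · have hbb : (x-t)^(b-1) ≤ Kb :=
        rpow_bound_on hx (by linarith) (by linarith) hKb
      have h3 : 0 ≤ Ka * (x-t)^(b-1) := by
        apply mul_nonneg _ h2
        have := rpow_nonneg (show (0:ℝ) ≤ x/2 by linarith) (a-1)
        have := rpow_nonneg hx.le (a-1)
        rw [hKa]; linarith
      nlinarith
    · have haa : t^(a-1) ≤ Ka := rpow_bound_on hx h.le htx hKa
      have h3 : 0 ≤ Kb * t^(a-1) := by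
        apply mul_nonneg _ h1
        have := rpow_nonneg (show (0:ℝ) ≤ x/2 by linarith) (b-1)
        have := rpow_nonneg hx.le (b-1)
        rw [hKb]; linarith
      nlinarith

lemma beta_value {a b x : ℝ} (ha : 0 < a) (hb : 0 < b) (hx : 0 < x) :
    ∫ t in (0:ℝ)..x, t^(a-1)*(x-t)^(b-1)
      = Gamma a * Gamma b / Gamma (a+b) * x^(a+b-1) := by
  have hscaled := Complex.betaIntegral_scaled (a:ℂ) (b:ℂ) hx
  have hGG := Complex.Gamma_mul_Gamma_eq_betaIntegral
    (by simpa using ha : 0 < (a:ℂ).re) (by simpa using hb : 0 < (b:ℂ).re)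
  have hGab : Complex.Gamma ((a:ℂ)+b) ≠ 0 := by
    rw [show ((a:ℂ)+b) = ((a+b:ℝ):ℂ) by push_cast; ring, Complex.Gamma_ofReal]
    exact_mod_cast (Gamma_pos_of_pos (by linarith)).ne'
  have hbeta : Complex.betaIntegral a b
      = Complex.Gamma a * Complex.Gamma b / Complex.Gamma ((a:ℂ)+b) := by
    rw [eq_div_iff hGab]
    linear_combination -hGG
  -- complex integral equals ofReal of real integral
  have hcongr : ∫ t in (0:ℝ)..x, (t:ℂ)^((a:ℂ)-1) * ((x:ℂ)-t)^((b:ℂ)-1)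
      = ((∫ t in (0:ℝ)..x, t^(a-1)*(x-t)^(b-1) : ℝ) : ℂ) := by
    rw [← intervalIntegral.integral_ofReal]
    apply intervalIntegral.integral_congr
    intro t ht
    rw [Set.uIcc_of_le hx.le] at ht
    obtain ⟨ht0, htx⟩ := ht
    beta_reduce
    rw [show ((a:ℂ)-1) = ((a-1:ℝ):ℂ) by push_cast; ring,
      show ((b:ℂ)-1) = ((b-1:ℝ):ℂ) by push_cast; ring,
      show ((x:ℂ)-(t:ℂ)) = ((x-t:ℝ):ℂ) by push_cast; ring,
      ← Complex.ofReal_cpow ht0, ← Complex.ofReal_cpow (by linarith : (0:ℝ) ≤ x - t),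
      ← Complex.ofReal_mul]
  rw [hcongr, hbeta] at hscaled
  have hrhs : (x:ℂ)^((a:ℂ)+b-1) = ((x^(a+b-1) : ℝ) : ℂ) := by
    rw [show ((a:ℂ)+b-1) = ((a+b-1:ℝ):ℂ) by push_cast; ring, ← Complex.ofReal_cpow hx.le]
  rw [hrhs] at hscaled
  have : ((∫ t in (0:ℝ)..x, t^(a-1)*(x-t)^(b-1) : ℝ) : ℂ)
      = ((Gamma a * Gamma b / Gamma (a+b) * x^(a+b-1) : ℝ) : ℂ) := by
    rw [hscaled]
    push_cast
    rw [← Complex.Gamma_ofReal, ← Complex.Gamma_ofReal, ← Complex.Gamma_ofReal]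
    push_cast
    ring
  exact_mod_cast this

lemma ml_integral_key {β : ℝ} (hβ0 : 0 < β) (hβ1 : β < 1) (l : ℝ) : ∀ x > (0:ℝ),
    (1 / Real.Gamma (1 - β)) *
        ∫ t in (0:ℝ)..x, (x - t) ^ (-β) * (t ^ (β - 1) * mittagLeffler β β (l * t ^ β))
      = mittagLeffler β 1 (l * x ^ β) := by
  intro x hx
  have h1β : (0:ℝ) < 1 - β := by linarith
  have hΓ1β : (0:ℝ) < Gamma (1-β) := Gamma_pos_of_pos h1β
  set F : ℕ → ℝ → ℝ :=
    fun k t => (x - t)^(-β) * (t^(β-1) * (l^k * t^(β*k) / Gamma (β*k+β))) with hF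
  have hpow : ∀ t : ℝ, 0 ≤ t → ∀ k : ℕ, (l*t^β)^k = l^k * t^(β*k) := by
    intro t ht k
    rw [mul_pow, ← Real.rpow_natCast (t^β) k, ← Real.rpow_mul ht]
  -- pointwise expansion of the integrand as a tsum
  have hptwise : ∀ t : ℝ, 0 ≤ t →
      (x - t)^(-β) * (t^(β-1) * mittagLeffler β β (l * t^β)) = ∑' k, F k t := by
    intro t ht
    rw [mittagLeffler, ← tsum_mul_left, ← tsum_mul_left]
    refine tsum_congr fun k => ?_
    rw [hpow t ht k]
  -- Gamma positivity for each k
  have hs : ∀ k : ℕ, (0:ℝ) < β*k+β := fun k => by positivity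
  have hΓs : ∀ k : ℕ, (0:ℝ) < Gamma (β*k+β) := fun k => Gamma_pos_of_pos (hs k)
  have hΓ1 : ∀ k : ℕ, (0:ℝ) < Gamma (β*k+1) := fun k => Gamma_pos_of_pos (by positivity)
  -- the beta-type integral for each k
  have hB : ∀ k : ℕ, ∫ t in (0:ℝ)..x, t^((β*k+β)-1)*(x-t)^((1-β)-1)
      = Gamma (β*k+β) * Gamma (1-β) / Gamma (β*k+1) * x^(β*k) := by
    intro k
    have := beta_value (a := β*k+β) (b := 1-β) (hs k) h1β hx
    rw [show β*(k:ℝ)+β+(1-β) = β*k+1 by ring] at this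
    rw [show β*(k:ℝ)+1-1 = β*(k:ℝ) by ring] at this
    exact this
  have hgint : ∀ k : ℕ, IntervalIntegrable
      (fun t : ℝ => (l^k / Gamma (β*k+β)) * (t^((β*k+β)-1)*(x-t)^((1-β)-1))) volume 0 x :=
    fun k => (beta_integrable (hs k) h1β hx).const_mul _
  have hagint : ∀ k : ℕ, IntervalIntegrable
      (fun t : ℝ => (|l|^k / Gamma (β*k+β)) * (t^((β*k+β)-1)*(x-t)^((1-β)-1))) volume 0 x :=
    fun k => (beta_integrable (hs k) h1β hx).const_mul _
  -- F k agrees with the scaled beta integrand on (0, x]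
  have hFg : ∀ k : ℕ, Set.EqOn (F k)
      (fun t : ℝ => (l^k / Gamma (β*k+β)) * (t^((β*k+β)-1)*(x-t)^((1-β)-1)))
      (Set.Ioc 0 x) := by
    intro k t ht
    have h1 : t^(β*(k:ℝ)+β-1) = t^(β-1) * t^(β*k) := by
      rw [← Real.rpow_add ht.1]; ring_nf
    simp only [hF]
    rw [show ((1:ℝ)-β)-1 = -β by ring, show β*(k:ℝ)+β-1 = β*(k:ℝ)+β-1 from rfl]
    rw [h1]
    ring
  have hIntF : ∀ k : ℕ, IntegrableOn (F k) (Set.Ioc 0 x) := by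
    intro k
    exact (IntegrableOn.congr_fun ((hgint k).1) (hFg k).symm measurableSet_Ioc)
  -- value of each integral
  have hval : ∀ k : ℕ, ∫ t in Set.Ioc 0 x, F k t
      = l^k * Gamma (1-β) * x^(β*k) / Gamma (β*k+1) := by
    intro k
    rw [setIntegral_congr_fun measurableSet_Ioc (hFg k),
      ← intervalIntegral.integral_of_le hx.le, intervalIntegral.integral_const_mul, hB k]
    field_simp
  -- norm of F k on (0,x]
  have hnorm : ∀ k : ℕ, ∀ t ∈ Set.Ioc (0:ℝ) x,
      ‖F k t‖ = (|l|^k / Gamma (β*k+β)) * (t^((β*k+β)-1)*(x-t)^((1-β)-1)) := by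
    intro k t ht
    have hxt : (0:ℝ) ≤ x - t := by linarith [ht.2]
    have h1 : t^(β*(k:ℝ)+β-1) = t^(β-1) * t^(β*k) := by
      rw [← Real.rpow_add ht.1]; ring_nf
    simp only [hF]
    rw [show ((1:ℝ)-β)-1 = -β by ring, h1]
    rw [Real.norm_eq_abs, abs_mul, abs_mul, abs_div, abs_mul,
      abs_of_nonneg (rpow_nonneg hxt _), abs_of_nonneg (rpow_nonneg ht.1.le _),
      abs_of_nonneg (rpow_nonneg ht.1.le _), abs_of_nonneg (hΓs k).le, abs_pow]
    ring
  have hIntnF : ∀ k : ℕ, ∫ t in Set.Ioc 0 x, ‖F k t‖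
      = |l|^k * Gamma (1-β) * x^(β*k) / Gamma (β*k+1) := by
    intro k
    rw [setIntegral_congr_fun measurableSet_Ioc (fun t ht => hnorm k t ht),
      ← intervalIntegral.integral_of_le hx.le, intervalIntegral.integral_const_mul, hB k]
    field_simp
  -- summability of the norms
  have hxβ : (0:ℝ) < x^β := rpow_pos_of_pos hx β
  have hsum : Summable (fun k : ℕ => |l|^k * Gamma (1-β) * x^(β*k) / Gamma (β*k+1)) := by
    have h1 : ∀ k : ℕ, |l|^k * Gamma (1-β) * x^(β*k) / Gamma (β*k+1)
        = Gamma (1-β) * ((|l| * x ^ β)^k / Gamma (β*k+1)) := by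
      intro k
      rw [mul_pow, ← Real.rpow_natCast (x^β) k, ← Real.rpow_mul hx.le]
      ring
    rw [funext h1]
    exact (summable_aux' hβ0 hβ1 1 (|l| * x ^ β) one_pos (by positivity)).mul_left _
  -- measurability
  have hmeas : ∀ k : ℕ, AEStronglyMeasurable (F k) (volume.restrict (Set.Ioc 0 x)) := by
    intro k
    apply Measurable.aestronglyMeasurable
    simp only [hF]
    fun_prop
  -- the lintegral bound for integral_tsum
  have hlint : ∑' k : ℕ, ∫⁻ t, ‖F k t‖₊ ∂(volume.restrict (Set.Ioc 0 x)) ≠ ⊤ := by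
    have heq : ∀ k : ℕ, ∫⁻ t, ‖F k t‖₊ ∂(volume.restrict (Set.Ioc 0 x))
        = ENNReal.ofReal (|l|^k * Gamma (1-β) * x^(β*k) / Gamma (β*k+1)) := by
      intro k
      rw [← hIntnF k]; exact (ofReal_integral_norm_eq_lintegral_enorm (hIntF k)).symm
    rw [funext heq, ← ENNReal.ofReal_tsum_of_nonneg (fun k => by positivity) hsum]
    exact ENNReal.ofReal_ne_top
  -- interchange
  have hswap := integral_tsum hmeas hlint
  have lhs_eq : ∫ t in (0:ℝ)..x, (x - t)^(-β) * (t^(β-1) * mittagLeffler β β (l * t^β))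
      = ∑' k : ℕ, l^k * Gamma (1-β) * x^(β*k) / Gamma (β*k+1) := by
    rw [intervalIntegral.integral_of_le hx.le]
    rw [show (∫ t in Set.Ioc 0 x, (x - t)^(-β) * (t^(β-1) * mittagLeffler β β (l * t^β)))
        = ∫ t in Set.Ioc 0 x, ∑' k, F k t from
      setIntegral_congr_fun measurableSet_Ioc (fun t ht => hptwise t ht.1.le)]
    rw [hswap]
    exact tsum_congr hval
  rw [lhs_eq, ← tsum_mul_left, mittagLeffler]
  refine tsum_congr fun k => ?_
  rw [hpow x hx.le k]
  field_simp

lemma ml_hasDerivAt {β : ℝ} (hβ0 : 0 < β) (hβ1 : β < 1) (l x : ℝ) (hx : 0 < x) :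
    HasDerivAt (fun y : ℝ => mittagLeffler β 1 (l * y ^ β))
      (l * (x ^ (β - 1) * mittagLeffler β β (l * x ^ β))) x := by
  set s : Set ℝ := Set.Ioo (x/2) (x+x) with hs
  have hxs : x ∈ s := ⟨by linarith, by linarith⟩
  have hΓ1 : ∀ k : ℕ, (0:ℝ) < Gamma (β*k+1) := fun k => Gamma_pos_of_pos (by positivity)
  set g : ℕ → ℝ → ℝ := fun k y => (l * y ^ β) ^ k / Gamma (β*k+1) with hg
  set g' : ℕ → ℝ → ℝ :=
    fun k y => ((k:ℝ) * (l * y ^ β) ^ (k-1) * (l * (β * y ^ (β-1)))) / Gamma (β*k+1) with hg'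
  set M : ℝ := |l| * (x+x) ^ β with hM
  set C : ℝ := |l| * (β * (x/2) ^ (β-1)) with hC
  set u : ℕ → ℝ := fun k => ((k:ℝ) * M ^ (k-1) * C) / Gamma (β*k+1) with hu
  have hM0 : 0 ≤ M := by positivity
  have hC0 : 0 ≤ C := by positivity
  -- summability of u
  have hu_sum : Summable u := by
    rw [← summable_nat_add_iff 1]
    have : ∀ j : ℕ, u (j+1) = C * (((j:ℝ)+1) * M ^ j / Gamma (β*j+(β+1))) := by
      intro j
      rw [hu]
      try simp only [Nat.add_sub_cancel]
      push_cast
      rw [show β*((j:ℝ)+1)+1 = β*j+(β+1) by ring]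
      ring
    rw [funext this]
    exact (summable_aux hβ0 hβ1 (β+1) M (by linarith) hM0).mul_left C
  -- derivative of each term on s
  have hderiv : ∀ k : ℕ, ∀ y ∈ s, HasDerivAt (g k) (g' k y) y := by
    intro k y hy
    have hy0 : 0 < y := lt_trans (by linarith [hy.1] : (0:ℝ) < x/2) hy.1
    have h1 : HasDerivAt (fun y : ℝ => y ^ β) (β * y ^ (β-1)) y :=
      Real.hasDerivAt_rpow_const (Or.inl hy0.ne')
    have h2 : HasDerivAt (fun y : ℝ => l * y ^ β) (l * (β * y ^ (β-1))) y := h1.const_mul l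
    have h3 : HasDerivAt (fun z : ℝ => z ^ k) ((k:ℝ) * (l * y ^ β) ^ (k-1)) (l * y ^ β) :=
      hasDerivAt_pow k _
    have h4 := (h3.comp y h2).div_const (Gamma (β*k+1))
    exact h4
  -- bound on s
  have hbound : ∀ k : ℕ, ∀ y ∈ s, ‖g' k y‖ ≤ u k := by
    intro k y hy
    have hy0 : 0 < y := lt_trans (by linarith [hy.1] : (0:ℝ) < x/2) hy.1
    have hb1 : |l * y ^ β| ≤ M := by
      rw [abs_mul, abs_of_nonneg (rpow_nonneg hy0.le β), hM]
      have : y ^ β ≤ (x+x) ^ β := rpow_le_rpow hy0.le (le_of_lt hy.2) hβ0.le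
      exact mul_le_mul_of_nonneg_left this (abs_nonneg l)
    have hb2 : y ^ (β-1) ≤ (x/2) ^ (β-1) :=
      rpow_le_rpow_of_nonpos (by linarith : (0:ℝ) < x/2) hy.1.le (by linarith)
    have h5 : |l * (β * y ^ (β-1))| ≤ C := by
      rw [abs_mul, hC]
      refine mul_le_mul_of_nonneg_left ?_ (abs_nonneg l)
      rw [abs_of_nonneg (by positivity : (0:ℝ) ≤ β * y ^ (β-1))]
      exact mul_le_mul_of_nonneg_left hb2 hβ0.le
    have h6 : |l * y ^ β| ^ (k-1) ≤ M ^ (k-1) := pow_le_pow_left₀ (abs_nonneg _) hb1 _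
    rw [hg', hu, Real.norm_eq_abs, abs_div, abs_of_nonneg (hΓ1 k).le]
    refine (div_le_div_iff_of_pos_right (hΓ1 k)).mpr ?_
    rw [abs_mul, abs_mul, Nat.abs_cast, abs_pow]
    refine mul_le_mul (mul_le_mul le_rfl h6 (by positivity) (Nat.cast_nonneg k)) h5
      (abs_nonneg _) (by positivity)
  -- summable at the point x
  have hg0 : Summable fun k => g k x := by
    apply Summable.of_norm
    have : ∀ k : ℕ, ‖g k x‖ = (|l| * x ^ β) ^ k / Gamma (β*k+1) := by
      intro k
      rw [hg, Real.norm_eq_abs, abs_div, abs_of_nonneg (hΓ1 k).le, abs_pow, abs_mul,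
        abs_of_nonneg (rpow_nonneg hx.le β)]
    rw [funext this]
    exact summable_aux' hβ0 hβ1 1 _ one_pos (by positivity)
  have hDA := hasDerivAt_tsum_of_isPreconnected hu_sum isOpen_Ioo isPreconnected_Ioo
    hderiv hbound hxs hg0 hxs
  -- identify the sum of derivatives
  have hsum_g' : Summable fun k => g' k x :=
    Summable.of_norm (hu_sum.of_nonneg_of_le (fun k => norm_nonneg _)
      (fun k => hbound k x hxs))
  have htsum : ∑' k, g' k x = l * (x ^ (β - 1) * mittagLeffler β β (l * x ^ β)) := by
    rw [Summable.tsum_eq_zero_add hsum_g']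
    have h0 : g' 0 x = 0 := by simp [hg']
    rw [h0, zero_add]
    have hterm : ∀ j : ℕ, g' (j+1) x
        = (l * x ^ (β-1)) * ((l * x ^ β) ^ j / Gamma (β*j+β)) := by
      intro j
      have hΓpos : (0:ℝ) < Gamma (β*(j:ℝ)+β) := Gamma_pos_of_pos (by positivity)
      have hne : (β*(j:ℝ)+β) ≠ 0 := by positivity
      rw [hg']
      try simp only [Nat.add_sub_cancel]
      push_cast
      rw [show β*((j:ℝ)+1)+1 = (β*(j:ℝ)+β)+1 by ring, Real.Gamma_add_one hne]
      rw [show (l*x^(β-1)) * ((l*x^β)^j / Gamma (β*(j:ℝ)+β))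
          = ((l*x^(β-1)) * (l*x^β)^j) / Gamma (β*(j:ℝ)+β) from by ring]
      rw [div_eq_div_iff (by positivity) hΓpos.ne']
      ring
    rw [funext hterm, tsum_mul_left, mittagLeffler]
    ring
  rw [htsum] at hDA
  exact hDA

/-- `y(t) = t^(β-1) E_{β,β}(λ t^β)` solves the Riemann–Liouville fractional differential
equation `D^β y = λ y` on `(0,∞)`: for every `x > 0`,
(i) the fractional integral of order `1-β` of `y` at `x` equals `E_β(λ x^β)`, and
(ii) its derivative at `x` equals `λ y(x)`. -/
theorem mittagLeffler_solves_rl_fde (β l : ℝ) (hβ0 : 0 < β) (hβ1 : β < 1) :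
    ∀ x > (0:ℝ),
      ((1 / Real.Gamma (1 - β)) *
          ∫ t in (0:ℝ)..x, (x - t) ^ (-β) * (t ^ (β - 1) * mittagLeffler β β (l * t ^ β))
        = mittagLeffler β 1 (l * x ^ β)) ∧
      HasDerivAt
        (fun y : ℝ => (1 / Real.Gamma (1 - β)) *
          ∫ t in (0:ℝ)..y, (y - t) ^ (-β) * (t ^ (β - 1) * mittagLeffler β β (l * t ^ β)))
        (l * (x ^ (β - 1) * mittagLeffler β β (l * x ^ β))) x := by
  intro x hx
  refine ⟨ml_integral_key hβ0 hβ1 l x hx, ?_⟩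
  have hev : (fun y : ℝ => (1 / Real.Gamma (1 - β)) *
        ∫ t in (0:ℝ)..y, (y - t) ^ (-β) * (t ^ (β - 1) * mittagLeffler β β (l * t ^ β)))
      =ᶠ[nhds x] (fun y : ℝ => mittagLeffler β 1 (l * y ^ β)) := by
    filter_upwards [Ioi_mem_nhds hx] with y hy using ml_integral_key hβ0 hβ1 l y hy
  exact (ml_hasDerivAt hβ0 hβ1 l x hx).congr_of_eventuallyEq hev
end
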